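/- Let σ > 0 and m > 0. The functional V : ℓ²(ℤ^N) → ℝ defined by V(φ) = −½(Σ_{κ=1}^N ‖∇⁺_κ φ‖²_{ℓ²} + m‖φ‖²_{ℓ²}) + (1/(2σ+2)) Σ_{n∈ℤ^N} |φ_n|^{2σ+2} is continuously Fréchet differentiable on ℓ²(ℤ^N), and its derivative is given by ⟨V′(φ), ψ⟩ = −(Σ_{κ=1}^N Σ_{n∈ℤ^N} (∇⁺_κ φ)_n (∇⁺_κ ψ)_n + m Σ_{n∈ℤ^N} φ_n ψ_n) + Σ_{n∈ℤ^N} |φ_n|^{2σ} φ_n ψ_n for all φ, ψ ∈ ℓ²(ℤ^N). -/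

import Mathlib

noncomputable section

open scoped ENNReal InnerProductSpace

/-- The lattice `ℤ^N`. -/
abbrev ZLat (N : ℕ) := Fin N → ℤ

/-- The space `ℓ²(ℤ^N)` of real square-summable sequences. -/
abbrev ellTwo (N : ℕ) := lp (fun _ : ZLat N => ℝ) 2

/-- The `κ`-th standard basis vector of `ℤ^N`. -/
def evec (N : ℕ) (κ : Fin N) : ZLat N := fun j => if j = κ then 1 else 0

lemma memℓp_shift {N : ℕ} (v : ZLat N) (φ : ellTwo N) :
    Memℓp (fun n => φ (n + v)) 2 := by
  have h2 : (0:ℝ) < (2 : ℝ≥0∞).toReal := by norm_num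
  rw [memℓp_gen_iff h2]
  have h := (memℓp_gen_iff h2).mp (lp.memℓp φ)
  exact ((Equiv.addRight v).summable_iff (f := fun n => ‖φ n‖ ^ (2:ℝ≥0∞).toReal)).2 h

/-- The shift operator `(S_v φ)_n = φ_{n+v}` on `ℓ²(ℤ^N)`. -/
def shiftOp {N : ℕ} (v : ZLat N) (φ : ellTwo N) : ellTwo N :=
  ⟨fun n => φ (n + v), memℓp_shift v φ⟩

/-- The forward difference operator `(∇⁺_κ φ)_n = φ_{n+e_κ} - φ_n`. -/
def fdiff {N : ℕ} (κ : Fin N) (φ : ellTwo N) : ellTwo N := shiftOp (evec N κ) φ - φ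

/-- The discrete Laplacian on `ℓ²(ℤ^N)`:
`(Δ_d φ)_n = Σ_κ (φ_{n+e_κ} + φ_{n-e_κ}) - 2N φ_n`. -/
def discLap {N : ℕ} (φ : ellTwo N) : ellTwo N :=
  (∑ κ : Fin N, (shiftOp (evec N κ) φ + shiftOp (-(evec N κ)) φ)) - ((2 * N : ℝ) • φ)

/-- The potential functional
`V(φ) = -½(Σ_κ ‖∇⁺_κ φ‖² + m‖φ‖²) + (1/(2σ+2)) Σ_n |φ_n|^{2σ+2}`. -/
def Vfun {N : ℕ} (σ m : ℝ) (φ : ellTwo N) : ℝ :=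
  -(1/2) * (∑ κ : Fin N, ‖fdiff κ φ‖ ^ 2 + m * ‖φ‖ ^ 2)
    + (1/(2*σ+2)) * ∑' n : ZLat N, |φ n| ^ (2*σ+2)


-- lp coe lemmas test
example {N : ℕ} (v : ZLat N) (φ ψ : ellTwo N) (n : ZLat N) :
    shiftOp v (φ + ψ) n = shiftOp v φ n + shiftOp v ψ n := by
  simp [shiftOp, lp.coeFn_add]

example {N : ℕ} (v : ZLat N) (c : ℝ) (φ : ellTwo N) (n : ZLat N) :
    shiftOp v (c • φ) n = c * shiftOp v φ n := by
  simp [shiftOp, lp.coeFn_smul]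

lemma shiftOp_norm {N : ℕ} (v : ZLat N) (φ : ellTwo N) : ‖shiftOp v φ‖ = ‖φ‖ := by
  have h2 : (0:ℝ) < (2 : ℝ≥0∞).toReal := by norm_num
  rw [lp.norm_eq_tsum_rpow h2, lp.norm_eq_tsum_rpow h2]
  congr 1
  exact (Equiv.addRight v).tsum_eq (fun n => ‖φ n‖ ^ (2:ℝ≥0∞).toReal)

def shiftCLM {N : ℕ} (v : ZLat N) : ellTwo N →L[ℝ] ellTwo N :=
  LinearMap.mkContinuous
    { toFun := shiftOp v
      map_add' := fun φ ψ => by ext n; simp [shiftOp, lp.coeFn_add]; rfl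
      map_smul' := fun c φ => by ext n; simp [shiftOp, lp.coeFn_smul] }
    1 (fun φ => by simp [shiftOp_norm])

def fdiffCLM {N : ℕ} (κ : Fin N) : ellTwo N →L[ℝ] ellTwo N :=
  shiftCLM (evec N κ) - ContinuousLinearMap.id ℝ _

lemma fdiffCLM_apply {N : ℕ} (κ : Fin N) (φ : ellTwo N) : fdiffCLM κ φ = fdiff κ φ := rfl

lemma hasDerivAt_q (σ : ℝ) (hσ : 0 < σ) (t : ℝ) :
    HasDerivAt (fun t : ℝ => (t^2)^σ * t) ((2*σ+1) * (t^2)^σ) t := by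
  rcases eq_or_ne t 0 with rfl | ht
  · have h0 : ((0:ℝ)^2)^σ = 0 := by
      rw [zero_pow (by norm_num)]; exact Real.zero_rpow hσ.ne'
    rw [h0, mul_zero]
    rw [hasDerivAt_iff_tendsto_slope]
    have hcont : ContinuousAt (fun t : ℝ => (t^2)^σ) 0 :=
      (Real.continuousAt_rpow_const _ _ (Or.inr hσ.le)).comp (continuous_pow 2).continuousAt
    have h1 := hcont.tendsto
    rw [h0] at h1
    refine Filter.Tendsto.congr' ?_ (h1.mono_left nhdsWithin_le_nhds)
    filter_upwards [self_mem_nhdsWithin] with x hx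
    simp only [Set.mem_compl_iff, Set.mem_singleton_iff] at hx
    rw [slope_def_field]
    field_simp
    ring
  · have ht2 : t^2 ≠ 0 := pow_ne_zero 2 ht
    have ht2p : (0:ℝ) < t^2 := lt_of_le_of_ne (sq_nonneg t) (Ne.symm ht2)
    have hsq : HasDerivAt (fun y : ℝ => y^2) (2*t) t := by simpa using hasDerivAt_pow 2 t
    have h1 : HasDerivAt (fun t : ℝ => (t^2)^σ) (σ * (t^2)^(σ-1) * (2*t)) t := by
      have := hsq.rpow_const (p := σ) (Or.inl ht2)
      simpa [mul_comm, mul_assoc, mul_left_comm] using this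
    have h2 := h1.mul (hasDerivAt_id t)
    have e : (t^2)^(σ-1) * t^2 = (t^2)^σ := by
      have := Real.rpow_add ht2p (σ-1) 1
      rw [Real.rpow_one] at this
      rw [← this]; norm_num
    have key : σ * (t^2)^(σ-1) * (2*t) * t + (t^2)^σ * 1 = (2*σ+1) * (t^2)^σ := by
      linear_combination (2*σ) * e
    rw [← key]
    exact h2

lemma hasDerivAt_h2 (σ : ℝ) (hσ : 0 < σ) (t : ℝ) :
    HasDerivAt (fun t : ℝ => (t^2)^(σ+1)) ((2*σ+2) * ((t^2)^σ * t)) t := by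
  have hsq : HasDerivAt (fun y : ℝ => y^2) (2*t) t := by simpa using hasDerivAt_pow 2 t
  have := hsq.rpow_const (p := σ+1) (Or.inr (by linarith))
  have e : 2*t * (σ+1) * (t^2)^(σ+1-1) = (2*σ+2) * ((t^2)^σ * t) := by
    norm_num; ring
  rw [← e]
  exact this

lemma q_lip (σ : ℝ) (hσ : 0 < σ) {R a b : ℝ} (ha : |a| ≤ R) (hb : |b| ≤ R) :
    |(a^2)^σ * a - (b^2)^σ * b| ≤ (2*σ+1) * (R^2)^σ * |a - b| := by
  have h := Convex.norm_image_sub_le_of_norm_hasDerivWithin_le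
    (f := fun t : ℝ => (t^2)^σ * t) (f' := fun t : ℝ => (2*σ+1) * (t^2)^σ)
    (C := (2*σ+1) * (R^2)^σ) (s := Set.Icc (-R) R)
    (fun x _ => (hasDerivAt_q σ hσ x).hasDerivWithinAt)
    (fun x hx => by
      rw [Real.norm_eq_abs, abs_of_nonneg (by positivity)]
      have hx2 : x^2 ≤ R^2 := sq_le_sq' hx.1 hx.2
      have h5 := Real.rpow_le_rpow (sq_nonneg x) hx2 hσ.le
      exact mul_le_mul_of_nonneg_left h5 (by linarith : (0:ℝ) ≤ 2*σ+1))
    (convex_Icc _ _) (abs_le.mp hb) (abs_le.mp ha)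
  simpa [Real.norm_eq_abs] using h

lemma key_est (σ : ℝ) (hσ : 0 < σ) {R a b : ℝ} (ha : |a| ≤ R) (hb : |b| ≤ R) :
    |((a+b)^2)^(σ+1) - (a^2)^(σ+1) - (2*σ+2)*((a^2)^σ*a)*b|
      ≤ (2*σ+2) * ((2*σ+1) * ((2*R)^2)^σ) * b^2 := by
  have hR : 0 ≤ R := le_trans (abs_nonneg a) ha
  set L : ℝ := (2*σ+1) * ((2*R)^2)^σ with hL
  have hLnn : 0 ≤ L := by positivity
  have hderiv : ∀ s : ℝ, HasDerivAt
      (fun s : ℝ => ((a+s*b)^2)^(σ+1) - (2*σ+2)*((a^2)^σ*a)*(s*b))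
      ((2*σ+2)*(((a+s*b)^2)^σ*(a+s*b))*b - (2*σ+2)*((a^2)^σ*a)*b) s := by
    intro s
    have haff : HasDerivAt (fun s : ℝ => a + s*b) b s := by
      simpa using ((hasDerivAt_id s).mul_const b).const_add a
    have h1 : HasDerivAt (fun s : ℝ => ((a+s*b)^2)^(σ+1))
        ((2*σ+2)*(((a+s*b)^2)^σ*(a+s*b))*b) s := by
      have := HasDerivAt.comp (h₂ := fun t : ℝ => (t^2)^(σ+1)) (h := fun s : ℝ => a + s*b)
        (x := s) (hasDerivAt_h2 σ hσ (a+s*b)) haff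
      exact this
    have h2 : HasDerivAt (fun s : ℝ => (2*σ+2)*((a^2)^σ*a)*(s*b))
        ((2*σ+2)*((a^2)^σ*a)*b) s := by
      simpa using ((hasDerivAt_id s).mul_const b).const_mul ((2*σ+2)*((a^2)^σ*a))
    exact h1.sub h2
  have hbound : ∀ s ∈ Set.Icc (0:ℝ) 1,
      ‖(2*σ+2)*(((a+s*b)^2)^σ*(a+s*b))*b - (2*σ+2)*((a^2)^σ*a)*b‖
        ≤ (2*σ+2) * L * b^2 := by
    intro s hs
    have hsb2 : |s*b| ≤ |b| := by
      rw [abs_mul, abs_of_nonneg hs.1]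
      exact mul_le_of_le_one_left (abs_nonneg b) hs.2
    have hsb : |a + s*b| ≤ 2*R := by
      calc |a + s*b| ≤ |a| + |s*b| := abs_add_le _ _
        _ ≤ R + R := add_le_add ha (le_trans hsb2 hb)
        _ = 2*R := by ring
    have ha2 : |a| ≤ 2*R := by linarith
    have hq := q_lip σ hσ (R := 2*R) hsb ha2
    have hd : a + s*b - a = s*b := by ring
    rw [hd] at hq
    rw [Real.norm_eq_abs]
    have e : (2*σ+2)*(((a+s*b)^2)^σ*(a+s*b))*b - (2*σ+2)*((a^2)^σ*a)*b
        = (2*σ+2) * (((a+s*b)^2)^σ*(a+s*b) - (a^2)^σ*a) * b := by ring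
    rw [e, abs_mul, abs_mul, abs_of_nonneg (by linarith : (0:ℝ) ≤ 2*σ+2)]
    have h3 : |((a+s*b)^2)^σ*(a+s*b) - (a^2)^σ*a| ≤ L * |b| :=
      le_trans hq (le_trans (mul_le_mul_of_nonneg_left hsb2 hLnn) (le_refl _))
    calc (2*σ+2) * |((a+s*b)^2)^σ*(a+s*b) - (a^2)^σ*a| * |b|
        ≤ (2*σ+2) * (L * |b|) * |b| := by
          exact mul_le_mul_of_nonneg_right
            (mul_le_mul_of_nonneg_left h3 (by linarith : (0:ℝ) ≤ 2*σ+2)) (abs_nonneg b)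
      _ = (2*σ+2) * L * b^2 := by rw [← sq_abs b]; ring
  have h := Convex.norm_image_sub_le_of_norm_hasDerivWithin_le
    (f := fun s : ℝ => ((a+s*b)^2)^(σ+1) - (2*σ+2)*((a^2)^σ*a)*(s*b))
    (f' := fun s => (2*σ+2)*(((a+s*b)^2)^σ*(a+s*b))*b - (2*σ+2)*((a^2)^σ*a)*b)
    (C := (2*σ+2) * L * b^2) (s := Set.Icc (0:ℝ) 1)
    (fun x _ => (hderiv x).hasDerivWithinAt) hbound (convex_Icc _ _)
    (Set.mem_Icc.mpr ⟨le_refl 0, zero_le_one⟩) (Set.mem_Icc.mpr ⟨zero_le_one, le_refl 1⟩)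
  simp only [one_mul, zero_mul, mul_zero, sub_zero, Real.norm_eq_abs] at h
  norm_num at h
  rw [show ((a+b)^2)^(σ+1) - (a^2)^(σ+1) - (2*σ+2)*((a^2)^σ*a)*b
      = (((a+b)^2)^(σ+1) - (2*σ+2)*((a^2)^σ*a)*b) - (a^2)^(σ+1) from by ring]
  calc _ ≤ (2*σ+2) * L * b^2 := h
    _ = (2*σ+2) * ((2*σ+1) * ((2*R)^2)^σ) * b^2 := by rw [hL]

open scoped RealInnerProductSpace in
lemma ell2_inner_eq {N : ℕ} (φ ψ : ellTwo N) : ⟪φ, ψ⟫ = ∑' n, φ n * ψ n := by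
  rw [lp.inner_eq_tsum]
  congr 1
  funext i; simp [mul_comm]

lemma summable_mul {N : ℕ} (φ ψ : ellTwo N) : Summable fun n => φ n * ψ n := by
  have := lp.summable_inner (𝕜 := ℝ) φ ψ
  simpa [mul_comm] using this

lemma summable_sq {N : ℕ} (φ : ellTwo N) : Summable fun n => (φ n)^2 := by
  have := summable_mul φ φ
  simpa [sq] using this

open scoped RealInnerProductSpace in
lemma ell2_norm_sq {N : ℕ} (φ : ellTwo N) : ‖φ‖^2 = ∑' n, (φ n)^2 := by
  rw [← real_inner_self_eq_norm_sq, ell2_inner_eq]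
  simp [sq]

lemma rpow_succ' (σ t : ℝ) (hσ : 0 < σ) (ht : 0 ≤ t) : t^(σ+1) = t^σ * t := by
  rcases eq_or_lt_of_le ht with h | h
  · rw [← h, Real.zero_rpow (by linarith : σ+1 ≠ 0), Real.zero_rpow hσ.ne', mul_zero]
  · rw [Real.rpow_add h, Real.rpow_one]

lemma abs_le_norm {N : ℕ} (φ : ellTwo N) (n : ZLat N) : |φ n| ≤ ‖φ‖ := by
  have := lp.norm_apply_le_norm (by norm_num : (2:ℝ≥0∞) ≠ 0) φ n
  simpa [Real.norm_eq_abs] using this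

lemma sq_le_norm_sq {N : ℕ} (φ : ellTwo N) (n : ZLat N) : (φ n)^2 ≤ ‖φ‖^2 := by
  have h := abs_le_norm φ n
  have := sq_le_sq' (by linarith [abs_nonneg (φ n), (abs_le.mp h).1] : -‖φ‖ ≤ φ n) (abs_le.mp h).2
  simpa using this

lemma memℓp_G {N : ℕ} (σ : ℝ) (hσ : 0 < σ) (φ : ellTwo N) :
    Memℓp (fun n => ((φ n)^2)^σ * φ n) 2 := by
  have h2 : (0:ℝ) < (2 : ℝ≥0∞).toReal := by norm_num
  rw [memℓp_gen_iff h2]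
  have hsum : Summable fun n => (‖φ‖^2)^(2*σ) * (φ n)^2 := (summable_sq φ).mul_left _
  refine Summable.of_nonneg_of_le (fun n => by positivity) (fun n => ?_) hsum
  have e0 : ‖((φ n)^2)^σ * φ n‖ ^ (2 : ℝ≥0∞).toReal = (((φ n)^2)^σ)^2 * (φ n)^2 := by
    rw [show ((2:ℝ≥0∞)).toReal = ((2:ℕ):ℝ) by norm_num, Real.rpow_natCast]
    rw [Real.norm_eq_abs, abs_mul, mul_pow, sq_abs, sq_abs]
  rw [e0]
  have e1 : (((φ n)^2)^σ)^2 = ((φ n)^2)^(2*σ) := by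
    rw [← Real.rpow_natCast (((φ n)^2)^σ) 2, ← Real.rpow_mul (sq_nonneg _)]
    norm_num [mul_comm]
  have h1 : ((φ n)^2)^(2*σ) ≤ (‖φ‖^2)^(2*σ) :=
    Real.rpow_le_rpow (sq_nonneg _) (sq_le_norm_sq φ n) (by linarith)
  rw [e1]
  exact mul_le_mul_of_nonneg_right h1 (sq_nonneg _)

/-- The nonlinearity `G(φ)_n = |φ_n|^{2σ} φ_n = ((φ_n)²)^σ φ_n`. -/
def Gfun {N : ℕ} (σ : ℝ) (hσ : 0 < σ) (φ : ellTwo N) : ellTwo N :=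
  ⟨fun n => ((φ n)^2)^σ * φ n, memℓp_G σ hσ φ⟩

lemma Gfun_apply {N : ℕ} (σ : ℝ) (hσ : 0 < σ) (φ : ellTwo N) (n : ZLat N) :
    Gfun σ hσ φ n = ((φ n)^2)^σ * φ n := rfl

lemma Gfun_lip {N : ℕ} (σ : ℝ) (hσ : 0 < σ) {R : ℝ} (φ ψ : ellTwo N)
    (hφ : ‖φ‖ ≤ R) (hψ : ‖ψ‖ ≤ R) :
    ‖Gfun σ hσ φ - Gfun σ hσ ψ‖ ≤ (2*σ+1) * (R^2)^σ * ‖φ - ψ‖ := by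
  have hR : 0 ≤ R := le_trans (norm_nonneg φ) hφ
  set L : ℝ := (2*σ+1) * (R^2)^σ with hLdef
  have hLnn : 0 ≤ L := by positivity
  have h2 : (0:ℝ) < (2 : ℝ≥0∞).toReal := by norm_num
  refine lp.norm_le_of_tsum_le h2 (by positivity) ?_
  have hpt : ∀ n, ‖(Gfun σ hσ φ - Gfun σ hσ ψ) n‖ ^ (2:ℝ≥0∞).toReal
      ≤ L^2 * ((φ - ψ) n)^2 := by
    intro n
    have happ : (Gfun σ hσ φ - Gfun σ hσ ψ) n = ((φ n)^2)^σ * φ n - ((ψ n)^2)^σ * ψ n := by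
      rw [lp.coeFn_sub]; rfl
    have hq := q_lip σ hσ (R := R) (le_trans (abs_le_norm φ n) hφ) (le_trans (abs_le_norm ψ n) hψ)
    rw [show ((2:ℝ≥0∞)).toReal = ((2:ℕ):ℝ) by norm_num, Real.rpow_natCast, happ]
    have hsub : (φ - ψ) n = φ n - ψ n := by rw [lp.coeFn_sub]; rfl
    rw [hsub, Real.norm_eq_abs]
    have hq' : |((φ n)^2)^σ * φ n - ((ψ n)^2)^σ * ψ n| ≤ L * |φ n - ψ n| := by
      rw [hLdef]; exact hq
    calc |((φ n)^2)^σ * φ n - ((ψ n)^2)^σ * ψ n|^2 ≤ (L * |φ n - ψ n|)^2 :=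
          pow_le_pow_left₀ (abs_nonneg _) hq' 2
      _ = L^2 * (φ n - ψ n)^2 := by rw [mul_pow, sq_abs]
  calc ∑' n, ‖(Gfun σ hσ φ - Gfun σ hσ ψ) n‖ ^ (2:ℝ≥0∞).toReal
      ≤ ∑' n, L^2 * ((φ - ψ) n)^2 := by
        refine Summable.tsum_le_tsum hpt ?_ ((summable_sq (φ - ψ)).mul_left _)
        · refine Summable.of_nonneg_of_le (fun n => Real.rpow_nonneg (norm_nonneg _) _) hpt
            ((summable_sq (φ - ψ)).mul_left _)
    _ = L^2 * ∑' n, ((φ - ψ) n)^2 := (tsum_mul_left)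
    _ = L^2 * ‖φ - ψ‖^2 := by rw [ell2_norm_sq]
    _ = (L * ‖φ - ψ‖)^(2:ℕ) := by ring
    _ = (L * ‖φ - ψ‖)^((2:ℝ≥0∞)).toReal := by
        rw [show ((2:ℝ≥0∞)).toReal = ((2:ℕ):ℝ) by norm_num, Real.rpow_natCast]

lemma Gfun_cont {N : ℕ} (σ : ℝ) (hσ : 0 < σ) : Continuous (Gfun σ hσ (N := N)) := by
  rw [continuous_iff_continuousAt]
  intro φ₀
  rw [Metric.continuousAt_iff]
  intro ε hε
  set R : ℝ := ‖φ₀‖ + 1 with hR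
  set L : ℝ := (2*σ+1) * (R^2)^σ with hLdef
  have hLnn : 0 ≤ L := by positivity
  refine ⟨min 1 (ε / (L+1)), lt_min one_pos (by positivity), fun {φ} hd => ?_⟩
  rw [dist_eq_norm] at hd ⊢
  have hφ : ‖φ‖ ≤ R := by
    have := norm_sub_norm_le φ φ₀
    have h1 : ‖φ - φ₀‖ < 1 := lt_of_lt_of_le hd (min_le_left _ _)
    rw [hR]; linarith
  have hφ₀ : ‖φ₀‖ ≤ R := by rw [hR]; linarith
  have h := Gfun_lip σ hσ (R := R) φ φ₀ hφ hφ₀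
  have h2 : ‖φ - φ₀‖ < ε / (L+1) := lt_of_lt_of_le hd (min_le_right _ _)
  calc ‖Gfun σ hσ φ - Gfun σ hσ φ₀‖ ≤ L * ‖φ - φ₀‖ := h
    _ ≤ L * (ε / (L+1)) := mul_le_mul_of_nonneg_left h2.le hLnn
    _ < ε := by
        rw [mul_div_assoc']
        rw [div_lt_iff₀ (by linarith)]
        nlinarith [norm_nonneg (φ - φ₀)]

lemma summable_h2 {N : ℕ} (σ : ℝ) (hσ : 0 < σ) (x : ellTwo N) :
    Summable fun n => ((x n)^2)^(σ+1) := by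
  have hsum : Summable fun n => (‖x‖^2)^σ * (x n)^2 := (summable_sq x).mul_left _
  refine Summable.of_nonneg_of_le (fun n => Real.rpow_nonneg (sq_nonneg _) _) (fun n => ?_) hsum
  rw [rpow_succ' σ _ hσ (sq_nonneg _)]
  exact mul_le_mul (Real.rpow_le_rpow (sq_nonneg _) (sq_le_norm_sq x n) hσ.le)
    (le_refl _) (sq_nonneg _) (Real.rpow_nonneg (sq_nonneg _) _)

open scoped RealInnerProductSpace in
lemma hasFDerivAt_F {N : ℕ} (σ : ℝ) (hσ : 0 < σ) (φ : ellTwo N) :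
    HasFDerivAt (fun x : ellTwo N => ∑' n, ((x n)^2)^(σ+1))
      ((2*σ+2) • (innerSL ℝ (Gfun σ hσ φ))) φ := by
  rw [hasFDerivAt_iff_isLittleO_nhds_zero]
  refine Asymptotics.IsBigO.trans_isLittleO ?_
    (Asymptotics.isLittleO_norm_pow_id (by norm_num : 1 < 2) (E' := ellTwo N))
  rw [Asymptotics.isBigO_iff]
  set R : ℝ := ‖φ‖ + 1 with hRdef
  refine ⟨(2*σ+2) * ((2*σ+1) * ((2*R)^2)^σ), ?_⟩
  filter_upwards [Metric.closedBall_mem_nhds (0 : ellTwo N) one_pos] with ψ hψ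
  rw [mem_closedBall_zero_iff] at hψ
  set C : ℝ := (2*σ+2) * ((2*σ+1) * ((2*R)^2)^σ) with hCdef
  have hCnn : 0 ≤ C := by positivity
  set d : ZLat N → ℝ := fun n =>
    (((φ + ψ) n)^2)^(σ+1) - ((φ n)^2)^(σ+1) - (2*σ+2)*(((φ n)^2)^σ * φ n)*(ψ n) with hddef
  have hadd : ∀ n, (φ + ψ) n = φ n + ψ n := fun n => by rw [lp.coeFn_add]; rfl
  have hkey : ∀ n, |d n| ≤ C * (ψ n)^2 := by
    intro n
    have ha : |φ n| ≤ R := le_trans (abs_le_norm φ n) (by rw [hRdef]; linarith)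
    have hb : |ψ n| ≤ R := le_trans (abs_le_norm ψ n) (by rw [hRdef]; linarith [norm_nonneg φ])
    have := key_est σ hσ (R := R) ha hb
    rw [hddef]
    simp only [hadd]
    calc |((φ n + ψ n)^2)^(σ+1) - ((φ n)^2)^(σ+1) - (2*σ+2)*(((φ n)^2)^σ * φ n)*(ψ n)|
        ≤ (2*σ+2) * ((2*σ+1) * ((2*R)^2)^σ) * (ψ n)^2 := this
      _ = C * (ψ n)^2 := by rw [hCdef]
  have S1 : Summable fun n => (((φ + ψ) n)^2)^(σ+1) := summable_h2 σ hσ _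
  have S2 : Summable fun n => ((φ n)^2)^(σ+1) := summable_h2 σ hσ _
  have S3 : Summable fun n => (2*σ+2)*(((φ n)^2)^σ * φ n)*(ψ n) := by
    have := (summable_mul (Gfun σ hσ φ) ψ).mul_left (2*σ+2)
    refine this.congr fun n => ?_
    rw [Gfun_apply]; ring
  have hd : Summable d := (S1.sub S2).sub S3
  have hsplit : (∑' n, (((φ + ψ) n)^2)^(σ+1)) - (∑' n, ((φ n)^2)^(σ+1))
      - ((2*σ+2) • (innerSL ℝ (Gfun σ hσ φ))) ψ = ∑' n, d n := by
    have e1 : ((2*σ+2) • (innerSL ℝ (Gfun σ hσ φ))) ψ = (2*σ+2) * ⟪Gfun σ hσ φ, ψ⟫ := by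
      simp
    rw [e1, ell2_inner_eq, ← tsum_mul_left, ← Summable.tsum_sub S1 S2, ← Summable.tsum_sub (S1.sub S2)]
    · congr 1; funext n; rw [hddef, Gfun_apply]; ring
    · exact (summable_mul (Gfun σ hσ φ) ψ).mul_left (2*σ+2)
  rw [hsplit]
  have habs : Summable fun n => |d n| := hd.abs
  calc ‖∑' n, d n‖ ≤ ∑' n, ‖d n‖ := norm_tsum_le_tsum_norm (by simpa [Real.norm_eq_abs] using habs)
    _ ≤ ∑' n, C * (ψ n)^2 := by
        refine Summable.tsum_le_tsum (fun n => by rw [Real.norm_eq_abs]; exact hkey n)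
          (by simpa [Real.norm_eq_abs] using habs) ((summable_sq ψ).mul_left _)
    _ = C * ∑' n, (ψ n)^2 := tsum_mul_left
    _ = C * ‖ψ‖^2 := by rw [ell2_norm_sq]
    _ ≤ C * ‖‖ψ‖^2‖ := by rw [Real.norm_eq_abs, abs_of_nonneg (by positivity)]

lemma abs_rpow_eq (σ t : ℝ) : |t| ^ (2*σ+2) = (t^2)^(σ+1) := by
  rw [show (2*σ+2 : ℝ) = 2*(σ+1) by ring, Real.rpow_mul (abs_nonneg t)]
  congr 1
  rw [show ((2:ℝ)) = ((2:ℕ):ℝ) by norm_num, Real.rpow_natCast, sq_abs]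

lemma abs_rpow_eq' (σ t : ℝ) : |t| ^ (2*σ) = (t^2)^σ := by
  rw [Real.rpow_mul (abs_nonneg t)]
  congr 1
  rw [show ((2:ℝ)) = ((2:ℕ):ℝ) by norm_num, Real.rpow_natCast, sq_abs]


open scoped RealInnerProductSpace

/-- `V` is continuously Fréchet differentiable on `ℓ²(ℤ^N)`, with
`⟨V'(φ), ψ⟩ = -(Σ_κ Σ_n (∇⁺_κ φ)_n (∇⁺_κ ψ)_n + m Σ_n φ_n ψ_n) + Σ_n |φ_n|^{2σ} φ_n ψ_n`. -/
theorem Vfun_c1_frechet (N : ℕ) (σ m : ℝ) (hσ : 0 < σ) (hm : 0 < m) :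
    ∃ V' : ellTwo N → (ellTwo N →L[ℝ] ℝ),
      Continuous V' ∧
      (∀ φ : ellTwo N, HasFDerivAt (Vfun σ m) (V' φ) φ) ∧
      ∀ φ ψ : ellTwo N, V' φ ψ =
        -((∑ κ : Fin N, ∑' n : ZLat N, fdiff κ φ n * fdiff κ ψ n)
            + m * ∑' n : ZLat N, φ n * ψ n)
          + ∑' n : ZLat N, |φ n| ^ (2*σ) * φ n * ψ n := by
  have h2σ : (2*σ+2 : ℝ) ≠ 0 := by linarith
  set V' : ellTwo N → (ellTwo N →L[ℝ] ℝ) := fun φ =>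
    (-(1/2) : ℝ) • ((∑ κ : Fin N, (2:ℝ) • (innerSL ℝ (fdiffCLM κ φ)).comp (fdiffCLM κ))
        + m • ((2:ℝ) • innerSL ℝ φ))
      + (1/(2*σ+2)) • ((2*σ+2) • innerSL ℝ (Gfun σ hσ φ)) with hV'
  refine ⟨V', ?_, ?_, ?_⟩
  · -- continuity
    rw [hV']
    apply Continuous.add
    · apply Continuous.fun_const_smul
      apply Continuous.add
      · apply continuous_finset_sum
        intro κ _
        exact (Continuous.clm_comp ((innerSL ℝ).continuous.comp (fdiffCLM κ).continuous)
          continuous_const).const_smul (2:ℝ)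
      · exact (((innerSL ℝ).continuous.comp continuous_id).const_smul (2:ℝ)).const_smul m
    · exact (((innerSL ℝ).continuous.comp (Gfun_cont σ hσ)).const_smul
        ((2*σ+2):ℝ)).const_smul (1/(2*σ+2))
  · -- differentiability
    intro φ
    have hVeq : Vfun σ m = fun φ : ellTwo N =>
        -(1/2) * ((∑ κ : Fin N, ‖fdiffCLM κ φ‖ ^ 2) + m * ‖φ‖ ^ 2)
          + (1/(2*σ+2)) * ∑' n : ZLat N, ((φ n)^2)^(σ+1) := by
      funext x
      rw [Vfun]
      congr 1
      exact congrArg (fun s => (1/(2*σ+2)) * s) (tsum_congr fun n => abs_rpow_eq σ (x n))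
    rw [hVeq]
    have hQκ : ∀ κ : Fin N, HasFDerivAt (fun x : ellTwo N => ‖fdiffCLM κ x‖ ^ 2)
        ((2:ℝ) • (innerSL ℝ (fdiffCLM κ φ)).comp (fdiffCLM κ)) φ := by
      intro κ
      have := (fdiffCLM (N := N) κ).hasFDerivAt (x := φ) |>.norm_sq
      convert this using 1
      ext ψ
      simp [two_smul]
      ext ψ; simp [two_smul]
      ext ψ; simp [two_smul]
    have hQsum : HasFDerivAt (fun x : ellTwo N => ∑ κ : Fin N, ‖fdiffCLM κ x‖ ^ 2)
        (∑ κ : Fin N, (2:ℝ) • (innerSL ℝ (fdiffCLM κ φ)).comp (fdiffCLM κ)) φ :=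
      HasFDerivAt.fun_sum fun κ _ => hQκ κ
    have hNorm : HasFDerivAt (fun x : ellTwo N => ‖x‖ ^ 2) ((2:ℝ) • innerSL ℝ φ) φ := by
      have := (hasStrictFDerivAt_norm_sq φ).hasFDerivAt
      convert this using 1
      ext ψ
      simp [two_smul]
      ext ψ; simp [two_smul]
    have hF := hasFDerivAt_F σ hσ φ
    exact ((hQsum.add (hNorm.const_mul m)).const_mul (-(1/2))).add (hF.const_mul (1/(2*σ+2)))
  · -- formula
    intro φ ψ
    rw [hV']
    have happ : V' φ ψ = -(1/2) * ((∑ κ : Fin N, 2 * ⟪fdiff κ φ, fdiff κ ψ⟫)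
        + m * (2 * ⟪φ, ψ⟫)) + (1/(2*σ+2)) * ((2*σ+2) * ⟪Gfun σ hσ φ, ψ⟫) := by
      rw [hV']
      simp [ContinuousLinearMap.sum_apply, fdiffCLM_apply, mul_comm]
      ring
    rw [happ]
    have e1 : ∀ κ : Fin N, ⟪fdiff κ φ, fdiff κ ψ⟫ = ∑' n, fdiff κ φ n * fdiff κ ψ n :=
      fun κ => ell2_inner_eq _ _
    have e2 : ⟪φ, ψ⟫ = ∑' n, φ n * ψ n := ell2_inner_eq _ _
    have e3 : ⟪Gfun σ hσ φ, ψ⟫ = ∑' n, |φ n| ^ (2*σ) * φ n * ψ n := by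
      rw [ell2_inner_eq]
      exact tsum_congr fun n => by rw [Gfun_apply, abs_rpow_eq']
    simp only [e1, e2, e3]
    rw [← Finset.mul_sum]
    field_simp
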